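/- Let n ≥ 1 and let x > 1 be odd with stopping time σ(x) = σ_n. Suppose that exactly n+1 indices s with 0 ≤ s ≤ κ(n) satisfy that T^s(x) is odd, and let α_1 < α_2 < ... < α_{n+1} enumerate these indices. Then 2^{σ_n} · T^{σ_n}(x) = 3^{n+1}·x + Σ_{i=1}^{n+1} 3^{n+1−i}·2^{α_i}, and T^{σ_n}(x) < x. -/

import Mathlib

/-- The 3x+1 map: `T x = x/2` if `x` is even, `(3x+1)/2` if `x` is odd. -/
def T (x : ℕ) : ℕ := if x % 2 = 0 then x / 2 else (3 * x + 1) / 2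

/-- The stopping time of `x`: the least `s ≥ 1` with `T^[s] x < x`. -/
noncomputable def stoppingTime (x : ℕ) : ℕ := sInf {s : ℕ | 1 ≤ s ∧ T^[s] x < x}

/-- `σ_n = ⌊1 + (n+1)·log₂ 3⌋`. -/
noncomputable def sigmaN (n : ℕ) : ℕ := ⌊1 + ((n : ℝ) + 1) * Real.logb 2 3⌋₊

/-- `κ(n) = ⌊n·log₂ 3⌋`. -/
noncomputable def kappa (n : ℕ) : ℕ := ⌊(n : ℝ) * Real.logb 2 3⌋₊

def oddSteps (x s : ℕ) : Finset ℕ :=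
  (Finset.range s).filter (fun k => T^[k] x % 2 = 1)

lemma two_T_even (y : ℕ) (h : y % 2 = 0) : 2 * T y = y := by
  simp only [T, h, if_pos]; omega

lemma two_T_odd (y : ℕ) (h : y % 2 = 1) : 2 * T y = 3 * y + 1 := by
  simp only [T, h]; norm_num; omega

lemma formula (x : ℕ) (s : ℕ) :
    2 ^ s * T^[s] x = 3 ^ (oddSteps x s).card * x
      + ∑ k ∈ oddSteps x s, 3 ^ ((oddSteps x s).filter (fun j => k < j)).card * 2 ^ k := by
  induction s with
  | zero => simp [oddSteps]
  | succ s ih =>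
    have hmem : ∀ k ∈ oddSteps x s, k < s := fun k hk => by
      simp [oddSteps, Finset.mem_filter] at hk; exact hk.1
    have hsn : s ∉ oddSteps x s := fun h => lt_irrefl s (hmem s h)
    rcases Nat.even_or_odd (T^[s] x) with he | ho
    · have h0 : T^[s] x % 2 = 0 := Nat.even_iff.mp he
      have hset : oddSteps x (s+1) = oddSteps x s := by
        simp [oddSteps, Finset.range_add_one, Finset.filter_insert, h0]
      have : 2 ^ (s+1) * T^[s+1] x = 2 ^ s * T^[s] x := by
        rw [Function.iterate_succ_apply', pow_succ, mul_assoc, two_T_even _ h0]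
      rw [this, hset, ih]
    · have h1 : T^[s] x % 2 = 1 := Nat.odd_iff.mp ho
      have hset : oddSteps x (s+1) = insert s (oddSteps x s) := by
        simp [oddSteps, Finset.range_add_one, Finset.filter_insert, h1]
      have hLHS : 2 ^ (s+1) * T^[s+1] x = 3 * (2 ^ s * T^[s] x) + 2 ^ s := by
        rw [Function.iterate_succ_apply', pow_succ, mul_assoc, two_T_odd _ h1]
        ring
      rw [hLHS, ih, hset]
      rw [Finset.card_insert_of_notMem hsn]
      rw [Finset.sum_insert hsn]
      have hfs : (insert s (oddSteps x s)).filter (fun j => s < j) = ∅ := by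
        apply Finset.filter_false_of_mem
        intro j hj
        rcases Finset.mem_insert.mp hj with rfl | hj
        · exact lt_irrefl j
        · exact fun h => absurd (hmem j hj) (not_lt.mpr h.le)
      have hsum : ∑ k ∈ oddSteps x s,
            3 ^ ((insert s (oddSteps x s)).filter (fun j => k < j)).card * 2 ^ k
          = ∑ k ∈ oddSteps x s,
            3 * (3 ^ ((oddSteps x s).filter (fun j => k < j)).card * 2 ^ k) := by
        apply Finset.sum_congr rfl
        intro k hk
        rw [Finset.filter_insert, if_pos (hmem k hk),
          Finset.card_insert_of_notMem (fun h => hsn (Finset.mem_filter.mp h).1)]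
        ring
      rw [hfs, hsum, ← Finset.mul_sum, pow_succ]
      simp
      ring

lemma one_le_logb : (1:ℝ) ≤ Real.logb 2 3 := by
  rw [Real.le_logb_iff_rpow_le (by norm_num) (by norm_num)]
  norm_num

lemma logb_nonneg' : (0:ℝ) ≤ Real.logb 2 3 := le_trans zero_le_one one_le_logb

lemma kappa_lt_sigma (n : ℕ) : kappa n + 2 ≤ sigmaN n := by
  have hk : (kappa n : ℝ) ≤ (n : ℝ) * Real.logb 2 3 :=
    Nat.floor_le (mul_nonneg (Nat.cast_nonneg n) logb_nonneg')
  rw [sigmaN, Nat.le_floor_iff]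
  · push_cast
    nlinarith [one_le_logb]
  · nlinarith [logb_nonneg', Nat.cast_nonneg (α := ℝ) n]

lemma two_pow_sigma_le (n : ℕ) : (2:ℕ) ^ sigmaN n ≤ 2 * 3 ^ (n+1) := by
  have hσ : (sigmaN n : ℝ) ≤ 1 + ((n : ℝ) + 1) * Real.logb 2 3 :=
    Nat.floor_le (by nlinarith [logb_nonneg', Nat.cast_nonneg (α := ℝ) n])
  have h1 : ((2:ℝ) ^ sigmaN n : ℝ) ≤ (2:ℝ) ^ ((1:ℝ) + ((n:ℝ)+1) * Real.logb 2 3) := by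
    rw [← Real.rpow_natCast 2 (sigmaN n)]
    exact Real.rpow_le_rpow_of_exponent_le (by norm_num) hσ
  have h2 : (2:ℝ) ^ ((1:ℝ) + ((n:ℝ)+1) * Real.logb 2 3) = 2 * 3 ^ (n+1) := by
    rw [Real.rpow_add (by norm_num), Real.rpow_one, mul_comm ((n:ℝ)+1), Real.rpow_mul (by norm_num),
      Real.rpow_logb (by norm_num) (by norm_num) (by norm_num)]
    rw [show ((n:ℝ)+1) = ((n+1 : ℕ) : ℝ) by push_cast; ring, Real.rpow_natCast]
  rw [h2] at h1
  exact_mod_cast (by push_cast at h1 ⊢; exact h1 : ((2:ℕ)^sigmaN n : ℝ) ≤ ((2 * 3^(n+1) : ℕ) : ℝ))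

theorem stmt1 (n : ℕ) (hn : 1 ≤ n) (x : ℕ) (hx : 1 < x) (hxodd : x % 2 = 1)
    (hstop : stoppingTime x = sigmaN n)
    (α : Fin (n + 1) → ℕ) (hmono : StrictMono α) (hle : ∀ i, α i ≤ kappa n)
    (henum : ∀ s : ℕ, s ≤ kappa n → (T^[s] x % 2 = 1 ↔ ∃ i, α i = s)) :
    2 ^ sigmaN n * T^[sigmaN n] x
      = 3 ^ (n + 1) * x + ∑ i : Fin (n + 1), 3 ^ (n - (i : ℕ)) * 2 ^ α i ∧
    T^[sigmaN n] x < x := by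
  have hσ1 : 1 ≤ sigmaN n := le_trans (by omega) (kappa_lt_sigma n)
  -- stopping: T^[σ] x < x
  have hlt : T^[sigmaN n] x < x := by
    have hne : {s : ℕ | 1 ≤ s ∧ T^[s] x < x}.Nonempty := by
      by_contra h
      rw [Set.not_nonempty_iff_eq_empty] at h
      rw [stoppingTime, h, Nat.sInf_empty] at hstop
      omega
    have := Nat.sInf_mem hne
    rw [stoppingTime] at hstop
    rw [hstop] at this
    exact this.2
  -- image of α
  have hinj : Function.Injective α := hmono.injective
  have himg_sub : Finset.image α Finset.univ ⊆ oddSteps x (sigmaN n) := by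
    intro k hk
    rcases Finset.mem_image.mp hk with ⟨i, _, rfl⟩
    simp only [oddSteps, Finset.mem_filter, Finset.mem_range]
    exact ⟨lt_of_le_of_lt (hle i) (by have := kappa_lt_sigma n; omega),
      (henum (α i) (hle i)).mpr ⟨i, rfl⟩⟩
  have hset : oddSteps x (sigmaN n) = Finset.image α Finset.univ := by
    apply Finset.Subset.antisymm _ himg_sub
    intro k hk
    simp only [oddSteps, Finset.mem_filter, Finset.mem_range] at hk
    by_cases hkκ : k ≤ kappa n
    · rcases (henum k hkκ).mp hk.2 with ⟨i, rfl⟩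
      exact Finset.mem_image.mpr ⟨i, Finset.mem_univ i, rfl⟩
    · exfalso
      push_neg at hkκ
      have hknot : k ∉ Finset.image α Finset.univ := by
        intro h
        rcases Finset.mem_image.mp h with ⟨i, _, rfl⟩
        exact absurd (hle i) (not_le.mpr hkκ)
      have hins : insert k (Finset.image α Finset.univ) ⊆ oddSteps x (sigmaN n) := by
        intro j hj
        rcases Finset.mem_insert.mp hj with rfl | hj
        · simp only [oddSteps, Finset.mem_filter, Finset.mem_range]
          exact ⟨hk.1, hk.2⟩
        · exact himg_sub hj
      have hcard : n + 2 ≤ (oddSteps x (sigmaN n)).card := by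
        calc n + 2 = (insert k (Finset.image α Finset.univ)).card := by
              rw [Finset.card_insert_of_notMem hknot,
                Finset.card_image_of_injective _ hinj, Finset.card_univ, Fintype.card_fin]
          _ ≤ _ := Finset.card_le_card hins
      have h1 : 3 ^ (n+2) * x ≤ 2 ^ sigmaN n * T^[sigmaN n] x := by
        rw [formula x (sigmaN n)]
        calc 3^(n+2) * x ≤ 3^(oddSteps x (sigmaN n)).card * x :=
              Nat.mul_le_mul_right x (Nat.pow_le_pow_right (by norm_num) hcard)
          _ ≤ _ := Nat.le_add_right _ _
      have h2 : 2 ^ sigmaN n * T^[sigmaN n] x < 2 ^ sigmaN n * x :=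
        (Nat.mul_lt_mul_left (Nat.pow_pos (by norm_num))).mpr hlt
      have h3 : 3 ^ (n+2) < 2 ^ sigmaN n :=
        lt_of_mul_lt_mul_right (lt_of_le_of_lt h1 h2) (Nat.zero_le x)
      have h4 := two_pow_sigma_le n
      have : (3:ℕ)^(n+2) = 3 * 3^(n+1) := by ring
      omega
  have hcard' : (oddSteps x (sigmaN n)).card = n + 1 := by
    rw [hset, Finset.card_image_of_injective _ hinj, Finset.card_univ, Fintype.card_fin]
  refine ⟨?_, hlt⟩
  rw [formula x (sigmaN n), hcard', hset]
  congr 1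
  rw [Finset.sum_image (fun a _ b _ h => hinj h)]
  apply Finset.sum_congr rfl
  intro i _
  congr 1
  have hfilt : (Finset.image α Finset.univ).filter (fun j => α i < j)
      = Finset.image α (Finset.Ioi i) := by
    ext j
    simp only [Finset.mem_filter, Finset.mem_image, Finset.mem_univ, true_and, Finset.mem_Ioi]
    constructor
    · rintro ⟨⟨m, rfl⟩, hm⟩
      exact ⟨m, hmono.lt_iff_lt.mp hm, rfl⟩
    · rintro ⟨m, him, rfl⟩
      exact ⟨⟨m, rfl⟩, hmono him⟩
  rw [hfilt, Finset.card_image_of_injective _ hinj, Fin.card_Ioi,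
    Nat.add_sub_cancel]
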